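/- Let m ≥ 1 be an integer, b > 1 a real number, and F a finite family of finite sets each of cardinality at most m with |F| > b^m. Then there exists a finite set S with |S| < m such that b^{|S|} · |F[S]| ≥ |F|, F[S] is nonempty, and for every nonempty finite set T disjoint from S one has b^{|T|} · |F[S ∪ T]| < |F[S]| (that is, F[S] satisfies the Γ(b)-condition relative to extensions of S). -/

import Mathlib

theorem statement_8 {α : Type*} [DecidableEq α] (m : ℕ) (hm : 1 ≤ m) (b : ℝ) (hb : 1 < b)
    (F : Finset (Finset α)) (hcard : ∀ U ∈ F, U.card ≤ m)
    (hF : b ^ m < (F.card : ℝ)) :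
    ∃ S : Finset α, S.card < m ∧
      (F.filter (fun U => S ⊆ U)).Nonempty ∧
      (F.card : ℝ) ≤ b ^ S.card * ((F.filter (fun U => S ⊆ U)).card : ℝ) ∧
      ∀ T : Finset α, T.Nonempty → Disjoint S T →
        b ^ T.card * ((F.filter (fun U => S ∪ T ⊆ U)).card : ℝ) <
          ((F.filter (fun U => S ⊆ U)).card : ℝ) := by
  classical
  have hb0 : (0:ℝ) < b := lt_trans one_pos hb
  have hbm : (0:ℝ) < b ^ m := by positivity
  have hF0 : (0:ℝ) < F.card := lt_trans hbm hF
  set C := (F.sup id).powerset.filter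
    (fun S => (F.card : ℝ) ≤ b ^ S.card * ((F.filter (fun U => S ⊆ U)).card : ℝ)) with hC
  have hempty : (∅ : Finset α) ∈ C := by
    rw [hC, Finset.mem_filter]
    constructor
    · simp
    · simp
  obtain ⟨S, hS, hmax⟩ := Finset.exists_max_image C (fun S => S.card) ⟨∅, hempty⟩
  have hSle : (F.card : ℝ) ≤ b ^ S.card * ((F.filter (fun U => S ⊆ U)).card : ℝ) :=
    (Finset.mem_filter.mp hS).2
  have hne : (F.filter (fun U => S ⊆ U)).Nonempty := by
    rw [Finset.nonempty_iff_ne_empty]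
    intro h
    rw [h] at hSle
    simp at hSle
    simp [hSle] at hF0
  obtain ⟨U, hU⟩ := hne
  have hUm := Finset.mem_filter.mp hU
  have hSm : S.card ≤ m := le_trans (Finset.card_le_card hUm.2) (hcard U hUm.1)
  have hSlt : S.card < m := by
    rcases lt_or_eq_of_le hSm with h | h
    · exact h
    · exfalso
      have hsub : F.filter (fun U => S ⊆ U) ⊆ {S} := by
        intro V hV
        have hV' := Finset.mem_filter.mp hV
        have hVS : S = V := Finset.eq_of_subset_of_card_le hV'.2
          (by rw [h]; exact hcard V hV'.1)
        simp [hVS.symm]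
      have hc1 : ((F.filter (fun U => S ⊆ U)).card : ℝ) ≤ 1 := by
        have := Finset.card_le_card hsub
        simp at this
        exact_mod_cast this
      have hle : (F.card : ℝ) ≤ b ^ m := by
        calc (F.card:ℝ) ≤ b ^ S.card * ((F.filter (fun U => S ⊆ U)).card : ℝ) := hSle
        _ ≤ b ^ m * 1 := by
            apply mul_le_mul _ hc1 (by positivity) (by positivity)
            rw [h]
        _ = b ^ m := mul_one _
      linarith
  refine ⟨S, hSlt, ⟨U, hU⟩, hSle, ?_⟩
  intro T hT hdisj
  by_contra hcon
  push_neg at hcon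
  have hFS1 : (1:ℝ) ≤ ((F.filter (fun U => S ⊆ U)).card : ℝ) := by
    have := Finset.card_pos.mpr ⟨U, hU⟩
    exact_mod_cast this
  have hneST : (F.filter (fun U => S ∪ T ⊆ U)).Nonempty := by
    rw [Finset.nonempty_iff_ne_empty]
    intro h
    rw [h] at hcon
    simp at hcon
    exact hcon (Finset.mem_filter.mp hU).1 (Finset.mem_filter.mp hU).2
  have hcardST : (S ∪ T).card = S.card + T.card := Finset.card_union_of_disjoint hdisj
  have hmem : S ∪ T ∈ C := by
    rw [hC, Finset.mem_filter]
    constructor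
    · obtain ⟨V, hV⟩ := hneST
      have hV' := Finset.mem_filter.mp hV
      rw [Finset.mem_powerset]
      exact hV'.2.trans (Finset.le_sup (f := id) hV'.1)
    · calc (F.card:ℝ) ≤ b ^ S.card * ((F.filter (fun U => S ⊆ U)).card : ℝ) := hSle
      _ ≤ b ^ S.card * (b ^ T.card * ((F.filter (fun U => S ∪ T ⊆ U)).card : ℝ)) := by
          apply mul_le_mul_of_nonneg_left hcon (by positivity)
      _ = b ^ (S ∪ T).card * ((F.filter (fun U => S ∪ T ⊆ U)).card : ℝ) := by
          rw [hcardST, pow_add]; ring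
  have hle := hmax _ hmem
  have : S.card < (S ∪ T).card := by
    rw [hcardST]
    have := Finset.card_pos.mpr hT
    omega
  omega
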